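/- arXiv:2109.10605 — 2 statements merged into one kernel-verified Lean document; each statement's English description precedes it below -/
import Mathlib

section
/- Let x ∈ 𝒳. Then x is an extremal in 𝒳' if and only if the tangent digraph 𝒟_x satisfies all of: (i) no nonempty proper subset of Supp(x) is isolated in 𝒟_x; (ii) 𝒟_x does not contain two node-disjoint cycles; (iii) at most one node of Supp(x) is a variable node of 𝒟_x. -/
open scoped Classical

noncomputable section

/-- Max-plus matrix-vector product: `(A ⊗ x) i = max_j (A i j + x j)`. -/
def mpApply {n : ℕ} (A : Matrix (Fin n) (Fin n) (WithBot ℝ)) (x : Fin n → WithBot ℝ)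
    (i : Fin n) : WithBot ℝ :=
  Finset.univ.sup fun j => A i j + x j

/-- The solution set `𝒳` of `A ⊗ x ≥ x`, `x ≠ -∞`. -/
def SuperEig {n : ℕ} (A : Matrix (Fin n) (Fin n) (WithBot ℝ)) : Set (Fin n → WithBot ℝ) :=
  {x | (∀ i, x i ≤ mpApply A x i) ∧ x ≠ fun _ => (⊥ : WithBot ℝ)}

/-- `𝒳' = 𝒳 ∪ {-∞}`. -/
def SuperEig' {n : ℕ} (A : Matrix (Fin n) (Fin n) (WithBot ℝ)) : Set (Fin n → WithBot ℝ) :=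
  SuperEig A ∪ {fun _ => (⊥ : WithBot ℝ)}

/-- Support of a vector. -/
def Supp {n : ℕ} (x : Fin n → WithBot ℝ) : Set (Fin n) := {i | x i ≠ ⊥}

/-- `v` is an extremal in `𝒳'`. -/
def IsExtremal {n : ℕ} (A : Matrix (Fin n) (Fin n) (WithBot ℝ)) (v : Fin n → WithBot ℝ) :
    Prop :=
  v ∈ SuperEig' A ∧
    ∀ y ∈ SuperEig' A, ∀ z ∈ SuperEig' A, v = (fun i => y i ⊔ z i) → v = y ∨ v = z

/-- `Arc A x a b` : there is an arc from `a` to `b` in the tangent digraph `𝒟ₓ`, i.e.,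
`a, b ∈ Supp x`, `A b a + x a = x b` and `A b k + x k ≤ x b` for all `k`. -/
def Arc {n : ℕ} (A : Matrix (Fin n) (Fin n) (WithBot ℝ)) (x : Fin n → WithBot ℝ)
    (a b : Fin n) : Prop :=
  x a ≠ ⊥ ∧ x b ≠ ⊥ ∧ A b a + x a = x b ∧ ∀ k, A b k + x k ≤ x b

/-- `i` is a I-variable node: no outgoing arc other than possibly the loop `(i,i)`. -/
def IVar {n : ℕ} (A : Matrix (Fin n) (Fin n) (WithBot ℝ)) (x : Fin n → WithBot ℝ)
    (i : Fin n) : Prop :=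
  x i ≠ ⊥ ∧ ∀ j, Arc A x i j → j = i

/-- `i` is a II-variable node: the endnode of any outgoing arc from `i` except the loop
has another incoming arc. -/
def IIVar {n : ℕ} (A : Matrix (Fin n) (Fin n) (WithBot ℝ)) (x : Fin n → WithBot ℝ)
    (i : Fin n) : Prop :=
  x i ≠ ⊥ ∧ ∀ j, j ≠ i → Arc A x i j → ∃ k, k ≠ i ∧ Arc A x k j

/-- `i` is a variable node: I-variable or II-variable. -/
def VarNode {n : ℕ} (A : Matrix (Fin n) (Fin n) (WithBot ℝ)) (x : Fin n → WithBot ℝ)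
    (i : Fin n) : Prop :=
  IVar A x i ∨ IIVar A x i

/-- `i` is an invariable node: some outgoing arc `(i,j)` with `j ≠ i` is the only incoming
arc of `j`. -/
def Invariable {n : ℕ} (A : Matrix (Fin n) (Fin n) (WithBot ℝ)) (x : Fin n → WithBot ℝ)
    (i : Fin n) : Prop :=
  x i ≠ ⊥ ∧ ∃ j, j ≠ i ∧ Arc A x i j ∧ ∀ k, Arc A x k j → k = i

/-- `W` is an isolated node set in `𝒟ₓ`: `W ⊆ Supp x` and no arc joins `W` and its
complement in either direction. -/
def IsolatedSet {n : ℕ} (A : Matrix (Fin n) (Fin n) (WithBot ℝ)) (x : Fin n → WithBot ℝ)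
    (W : Set (Fin n)) : Prop :=
  W ⊆ Supp x ∧ ∀ a b, Arc A x a b → (a ∈ W ↔ b ∈ W)

/-- `𝒳^{≤ x}`: solutions below `x` and different from `x`. -/
def BelowSet {n : ℕ} (A : Matrix (Fin n) (Fin n) (WithBot ℝ)) (x : Fin n → WithBot ℝ) :
    Set (Fin n → WithBot ℝ) :=
  {y ∈ SuperEig A | y ≤ x ∧ y ≠ x}

/-- A cycle of length `k ≥ 1` in the tangent digraph `𝒟ₓ`, given by the nodes
`c 0, c 1, …, c (k-1), c 0`. Its node set is `c '' Set.Iio k`. -/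
def IsCycle {n : ℕ} (A : Matrix (Fin n) (Fin n) (WithBot ℝ)) (x : Fin n → WithBot ℝ)
    (k : ℕ) (c : ℕ → Fin n) : Prop :=
  1 ≤ k ∧ ∀ t < k, Arc A x (c t) (c ((t + 1) % k))

namespace S14
variable {n : ℕ}

def Sat (A : Matrix (Fin n) (Fin n) (WithBot ℝ)) (x : Fin n → WithBot ℝ) (j : Fin n) : Prop :=
  ∃ k, Arc A x k j

def Good (A : Matrix (Fin n) (Fin n) (WithBot ℝ)) (x : Fin n → WithBot ℝ)
    (U : Set (Fin n)) : Prop :=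
  U ⊆ Supp x ∧ U.Nonempty ∧ ∀ j, Sat A x j → j ∉ U → ∃ k, Arc A x k j ∧ k ∉ U

def GoodPair (A : Matrix (Fin n) (Fin n) (WithBot ℝ)) (x : Fin n → WithBot ℝ) : Prop :=
  ∃ U V, Good A x U ∧ Good A x V ∧ Disjoint U V

variable {A : Matrix (Fin n) (Fin n) (WithBot ℝ)} {x : Fin n → WithBot ℝ}

lemma le_mp (y : Fin n → WithBot ℝ) (i j : Fin n) : A i j + y j ≤ mpApply A y i := by
  unfold mpApply; exact Finset.le_sup (f := fun j => A i j + y j) (Finset.mem_univ j)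

lemma mp_mono {y z : Fin n → WithBot ℝ} (h : ∀ j, y j ≤ z j) (i : Fin n) :
    mpApply A y i ≤ mpApply A z i := by
  unfold mpApply; exact Finset.sup_mono_fun (fun j _ => add_le_add_right (h j) _)

lemma mp_attained (y : Fin n → WithBot ℝ) (i : Fin n) : ∃ j, mpApply A y i = A i j + y j := by
  unfold mpApply
  obtain ⟨j, _, he⟩ := Finset.exists_mem_eq_sup Finset.univ ⟨i, Finset.mem_univ i⟩
      (fun j => A i j + y j)
  exact ⟨j, he⟩

lemma ne_bot_of_add {a b : WithBot ℝ} (h : a + b ≠ ⊥) : a ≠ ⊥ ∧ b ≠ ⊥ := by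
  constructor <;> rintro rfl <;> simp at h

lemma sat_iff (hx : x ∈ SuperEig A) {i : Fin n} (hi : x i ≠ ⊥) :
    Sat A x i ↔ mpApply A x i = x i := by
  constructor
  · rintro ⟨k, hk⟩
    refine le_antisymm (Finset.sup_le fun j _ => hk.2.2.2 j) (hx.1 i)
  · intro h
    obtain ⟨j, hj⟩ := mp_attained x i
    rw [h] at hj
    have hb := ne_bot_of_add (hj ▸ hi)
    exact ⟨j, hb.2, hi, hj.symm, fun k => h ▸ le_mp x i k⟩

lemma arc_of_eq {k i : Fin n} (hi : x i ≠ ⊥) (hsat : mpApply A x i = x i)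
    (heq : A i k + x k = x i) : Arc A x k i := by
  have hb := ne_bot_of_add (heq ▸ hi)
  exact ⟨hb.2, hi, heq, fun l => hsat ▸ le_mp x i l⟩


/-! ### epsilon perturbation -/

def gapSet (A : Matrix (Fin n) (Fin n) (WithBot ℝ)) (x : Fin n → WithBot ℝ) : Finset (Fin n) :=
  Finset.univ.filter (fun i => ¬ Sat A x i ∧ x i ≠ ⊥)

def gap (A : Matrix (Fin n) (Fin n) (WithBot ℝ)) (x : Fin n → WithBot ℝ) (i : Fin n) : ℝ :=
  WithBot.unbotD 0 (mpApply A x i) - WithBot.unbotD 0 (x i)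

def eps (A : Matrix (Fin n) (Fin n) (WithBot ℝ)) (x : Fin n → WithBot ℝ) : ℝ :=
  (insert (1:ℝ) ((gapSet A x).image (gap A x))).min' ⟨1, Finset.mem_insert_self 1 _⟩

lemma strict_of_not_sat (hx : x ∈ SuperEig A) {i : Fin n} (hi : x i ≠ ⊥) (hns : ¬ Sat A x i) :
    x i < mpApply A x i :=
  lt_of_le_of_ne (hx.1 i) (fun h => hns ((sat_iff hx hi).2 h.symm))

lemma gap_pos (hx : x ∈ SuperEig A) {i : Fin n} (hi : i ∈ gapSet A x) : 0 < gap A x i := by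
  rw [gapSet, Finset.mem_filter] at hi
  have hlt := strict_of_not_sat hx hi.2.2 hi.2.1
  obtain ⟨s, hs⟩ := WithBot.ne_bot_iff_exists.1 hi.2.2
  have hmpb : mpApply A x i ≠ ⊥ := fun h => by simp [h, ← hs] at hlt
  obtain ⟨r, hr⟩ := WithBot.ne_bot_iff_exists.1 hmpb
  rw [← hs, ← hr, WithBot.coe_lt_coe] at hlt
  rw [gap, ← hs, ← hr]
  simpa using hlt

lemma eps_pos (hx : x ∈ SuperEig A) : 0 < eps A x := by
  have h := Finset.min'_mem (insert (1:ℝ) ((gapSet A x).image (gap A x)))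
    ⟨1, Finset.mem_insert_self 1 _⟩
  rw [Finset.mem_insert] at h
  rcases h with h | h
  · rw [eps, h]; norm_num
  · obtain ⟨i, hi, hgi⟩ := Finset.mem_image.1 h
    rw [eps, hgi.symm] at *
    exact hgi ▸ (gap_pos hx hi)

lemma eps_le_gap {i : Fin n} (hi : i ∈ gapSet A x) : eps A x ≤ gap A x i :=
  Finset.min'_le _ _ (Finset.mem_insert_of_mem (Finset.mem_image_of_mem _ hi))

/-- lower `x` by `eps` on `U` -/
def lower (A : Matrix (Fin n) (Fin n) (WithBot ℝ)) (x : Fin n → WithBot ℝ)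
    (U : Set (Fin n)) : Fin n → WithBot ℝ :=
  fun i => if i ∈ U then x i + ((-(eps A x) : ℝ) : WithBot ℝ) else x i

lemma add_nonpos_le (a : WithBot ℝ) {c : ℝ} (hc : c ≤ 0) : a + (c : WithBot ℝ) ≤ a := by
  induction a using WithBot.recBotCoe with
  | bot => simp
  | coe a => rw [← WithBot.coe_add, WithBot.coe_le_coe]; linarith

lemma lower_le (hx : x ∈ SuperEig A) (U : Set (Fin n)) (i : Fin n) : lower A x U i ≤ x i := by
  rw [lower]
  split
  · exact add_nonpos_le _ (by linarith [eps_pos hx])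
  · exact le_rfl

lemma lower_ge (hx : x ∈ SuperEig A) (U : Set (Fin n)) (i : Fin n) :
    x i + ((-(eps A x) : ℝ) : WithBot ℝ) ≤ lower A x U i := by
  rw [lower]
  split
  · exact le_rfl
  · exact add_nonpos_le _ (by linarith [eps_pos hx])

lemma mp_lower_ge (hx : x ∈ SuperEig A) (U : Set (Fin n)) (i : Fin n) :
    mpApply A x i + ((-(eps A x) : ℝ) : WithBot ℝ) ≤ mpApply A (lower A x U) i := by
  by_cases hb : mpApply A x i = ⊥
  · rw [hb]; simp
  · obtain ⟨j, hj⟩ := mp_attained x i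
    rw [hj, add_assoc]
    exact le_trans (add_le_add_right (lower_ge hx U j) _) (le_mp _ i j)

lemma lower_mem (hx : x ∈ SuperEig A) {U : Set (Fin n)} (hU : Good A x U) :
    lower A x U ∈ SuperEig A := by
  constructor
  · intro i
    by_cases hiU : i ∈ U
    · have h1 : lower A x U i = x i + ((-(eps A x) : ℝ) : WithBot ℝ) := if_pos hiU
      rw [h1]
      exact le_trans (add_le_add_left (hx.1 i) _) (mp_lower_ge hx U i)
    · have h1 : lower A x U i = x i := if_neg hiU
      rw [h1]
      by_cases hib : x i = ⊥
      · rw [hib]; exact bot_le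
      by_cases hsat : Sat A x i
      · obtain ⟨k, hk, hkU⟩ := hU.2.2 i hsat hiU
        have hkl : lower A x U k = x k := if_neg hkU
        calc x i = A i k + lower A x U k := by rw [hkl, hk.2.2.1]
        _ ≤ _ := le_mp _ i k
      · -- strict gap case
        have higap : i ∈ gapSet A x := by
          rw [gapSet, Finset.mem_filter]; exact ⟨Finset.mem_univ i, hsat, hib⟩
        have hlt := strict_of_not_sat hx hib hsat
        obtain ⟨s, hs⟩ := WithBot.ne_bot_iff_exists.1 hib
        have hmpb : mpApply A x i ≠ ⊥ := fun h => by simp [h, ← hs] at hlt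
        obtain ⟨r, hr⟩ := WithBot.ne_bot_iff_exists.1 hmpb
        have hle : x i ≤ mpApply A x i + ((-(eps A x) : ℝ) : WithBot ℝ) := by
          rw [← hs, ← hr, ← WithBot.coe_add, WithBot.coe_le_coe]
          have := eps_le_gap higap
          rw [gap, ← hs, ← hr] at this
          simp at this
          linarith
        exact le_trans hle (mp_lower_ge hx U i)
  · intro hbot
    obtain ⟨u, hu⟩ := hU.2.1
    have h1 : lower A x U u = x u + ((-(eps A x) : ℝ) : WithBot ℝ) := if_pos hu
    have h2 := congrFun hbot u
    rw [h1] at h2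
    obtain ⟨s, hs⟩ := WithBot.ne_bot_iff_exists.1 (hU.1 hu)
    rw [← hs, ← WithBot.coe_add] at h2
    exact WithBot.coe_ne_bot h2

lemma lower_ne (hx : x ∈ SuperEig A) {U : Set (Fin n)} (hU : Good A x U) :
    lower A x U ≠ x := by
  intro h
  obtain ⟨u, hu⟩ := hU.2.1
  have h2 := congrFun h u
  rw [lower, if_pos hu] at h2
  obtain ⟨s, hs⟩ := WithBot.ne_bot_iff_exists.1 (hU.1 hu)
  rw [← hs, ← WithBot.coe_add, WithBot.coe_inj] at h2
  have := eps_pos hx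
  linarith

lemma not_extremal_of_goodPair (hx : x ∈ SuperEig A) (h : GoodPair A x) :
    ¬ IsExtremal A x := by
  obtain ⟨U, V, hU, hV, hdisj⟩ := h
  intro hext
  have hxeq : x = fun i => lower A x U i ⊔ lower A x V i := by
    funext i
    by_cases hiU : i ∈ U
    · have hiV : i ∉ V := fun hiV => (hdisj.ne_of_mem hiU hiV) rfl
      have h1 : lower A x V i = x i := if_neg hiV
      rw [h1]
      exact (sup_eq_right.2 (lower_le hx U i)).symm
    · have h1 : lower A x U i = x i := if_neg hiU
      rw [h1]
      exact (sup_eq_left.2 (lower_le hx V i)).symm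
  rcases hext.2 _ (Or.inl (lower_mem hx hU)) _ (Or.inl (lower_mem hx hV)) hxeq with h | h
  · exact lower_ne hx hU h.symm
  · exact lower_ne hx hV h.symm

/-- Core of Lemma A: equality set is self-supporting, i.e. the disagreement set is good. -/
lemma good_of_below (hx : x ∈ SuperEig A) {y : Fin n → WithBot ℝ} (hy : y ∈ SuperEig A)
    (hyx : ∀ i, y i ≤ x i) (hne : y ≠ x) :
    Good A x {i | x i ≠ ⊥ ∧ y i ≠ x i} := by
  refine ⟨fun i hi => hi.1, ?_, ?_⟩
  · have : ∃ i, y i ≠ x i := by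
      by_contra h
      push_neg at h
      exact hne (funext h)
    obtain ⟨i, hi⟩ := this
    refine ⟨i, ?_, hi⟩
    intro hib
    apply hi
    rw [hib]
    exact le_bot_iff.1 (hib ▸ hyx i)
  · intro j hsat hjU
    have hjb : x j ≠ ⊥ := hsat.choose_spec.2.1
    have hyj : y j = x j := by
      by_contra h
      exact hjU ⟨hjb, h⟩
    have hmpx : mpApply A x j = x j := (sat_iff hx hjb).1 hsat
    have h1 : mpApply A y j = x j := by
      refine le_antisymm (hmpx ▸ mp_mono hyx j) ?_
      calc x j = y j := hyj.symm
      _ ≤ _ := hy.1 j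
    obtain ⟨k, hk⟩ := mp_attained y j
    rw [h1] at hk
    have hkb := ne_bot_of_add (hk ▸ hjb)
    have h2 : A j k + x k = x j := by
      refine le_antisymm (hmpx ▸ le_mp x j k) ?_
      calc x j = A j k + y k := hk
      _ ≤ A j k + x k := add_le_add_right (hyx k) _
    have hyk : y k = x k := WithBot.add_left_cancel hkb.1 (hk.symm.trans h2.symm)
    refine ⟨k, arc_of_eq hjb hmpx h2, fun hkU => hkU.2 hyk⟩

lemma goodPair_of_not_extremal (hx : x ∈ SuperEig A) (h : ¬ IsExtremal A x) :
    GoodPair A x := by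
  rw [IsExtremal] at h
  push_neg at h
  obtain ⟨y, hy, z, hz, hxyz, hney, hnez⟩ := h (Or.inl hx)
  have hyx : ∀ i, y i ≤ x i := fun i => by rw [hxyz]; exact le_sup_left
  have hzx : ∀ i, z i ≤ x i := fun i => by rw [hxyz]; exact le_sup_right
  have hy' : y ∈ SuperEig A := by
    rcases hy with hy | hy
    · exact hy
    · exfalso
      apply hnez
      funext i
      have := congrFun hxyz i
      rw [Set.mem_singleton_iff] at hy
      rw [hy] at this
      simpa using this
  have hz' : z ∈ SuperEig A := by
    rcases hz with hz | hz
    · exact hz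
    · exfalso
      apply hney
      funext i
      have := congrFun hxyz i
      rw [Set.mem_singleton_iff] at hz
      rw [hz] at this
      simpa using this
  refine ⟨_, _, good_of_below hx hy' hyx (fun h => hney h.symm),
    good_of_below hx hz' hzx (fun h => hnez h.symm), ?_⟩
  rw [Set.disjoint_left]
  rintro i ⟨hib, hyi⟩ ⟨_, hzi⟩
  have := congrFun hxyz i
  rcases le_total (y i) (z i) with hle | hle
  · rw [sup_eq_right.2 hle] at this
    exact hzi this.symm
  · rw [sup_eq_left.2 hle] at this
    exact hyi this.symm

theorem extremal_iff_not_goodPair (hx : x ∈ SuperEig A) :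
    IsExtremal A x ↔ ¬ GoodPair A x := by
  constructor
  · intro hext hgp
    exact not_extremal_of_goodPair hx hgp hext
  · intro hgp
    by_contra hext
    exact hgp (goodPair_of_not_extremal hx hext)

/-! ### graph part : reachability and cycles -/

def Reach (A : Matrix (Fin n) (Fin n) (WithBot ℝ)) (x : Fin n → WithBot ℝ)
    (S : Set (Fin n)) : Set (Fin n) :=
  {b | ∃ a ∈ S, Relation.ReflTransGen (Arc A x) a b}

lemma subset_reach (S : Set (Fin n)) : S ⊆ Reach A x S :=
  fun a ha => ⟨a, ha, Relation.ReflTransGen.refl⟩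

lemma reach_subset_supp {S : Set (Fin n)} (hS : S ⊆ Supp x) : Reach A x S ⊆ Supp x := by
  rintro b ⟨a, ha, hab⟩
  induction hab with
  | refl => exact hS ha
  | tail _ harc _ => exact harc.2.1

lemma reach_closed {S : Set (Fin n)} {b b' : Fin n} (hb : b ∈ Reach A x S)
    (harc : Arc A x b b') : b' ∈ Reach A x S := by
  obtain ⟨a, ha, hab⟩ := hb
  exact ⟨a, ha, hab.tail harc⟩

lemma mod_succ_pred {t k : ℕ} (h : t < k) : ((t + k - 1) % k + 1) % k = t := by
  have h1 : t + k - 1 + 1 = t + k := Nat.sub_add_cancel (by omega)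
  rw [Nat.mod_add_mod, h1, Nat.add_mod_right, Nat.mod_eq_of_lt h]

section Cyc
variable {k : ℕ} {c : ℕ → Fin n}

lemma cyc_supp (hc : IsCycle A x k c) {t : ℕ} (ht : t < k) : x (c t) ≠ ⊥ :=
  (hc.2 t ht).1

lemma cyc_pred (hc : IsCycle A x k c) {t : ℕ} (ht : t < k) :
    ∃ s, s < k ∧ Arc A x (c s) (c t) := by
  refine ⟨(t + k - 1) % k, Nat.mod_lt _ (by omega), ?_⟩
  have := hc.2 ((t + k - 1) % k) (Nat.mod_lt _ (by omega))
  rwa [mod_succ_pred ht] at this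

lemma cyc_reach (hc : IsCycle A x k c) {t t' : ℕ} (ht : t < k) (ht' : t' < k) :
    Relation.ReflTransGen (Arc A x) (c t) (c t') := by
  have key : ∀ s : ℕ, Relation.ReflTransGen (Arc A x) (c t) (c ((t + s) % k)) := by
    intro s
    induction s with
    | zero => rw [Nat.add_zero, Nat.mod_eq_of_lt ht]
    | succ s ih =>
      refine ih.tail ?_
      have := hc.2 ((t + s) % k) (Nat.mod_lt _ (by omega))
      rwa [Nat.mod_add_mod, show t + s + 1 = t + (s+1) by omega] at this
  have := key (t' + k - t)
  rwa [show t + (t' + k - t) = t' + k by omega, Nat.add_mod_right, Nat.mod_eq_of_lt ht'] at this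

lemma cyc_subset_reach (hc : IsCycle A x k c) {S : Set (Fin n)} {t : ℕ} (ht : t < k)
    (hmem : c t ∈ Reach A x S) : c '' Set.Iio k ⊆ Reach A x S := by
  rintro v ⟨t', ht', rfl⟩
  obtain ⟨a, ha, hab⟩ := hmem
  exact ⟨a, ha, hab.trans (cyc_reach hc ht ht')⟩

lemma cyc_img_supp (hc : IsCycle A x k c) : c '' Set.Iio k ⊆ Supp x := by
  rintro v ⟨t, ht, rfl⟩
  exact cyc_supp hc ht

lemma cyc_img_nonempty (hc : IsCycle A x k c) : (c '' Set.Iio k).Nonempty :=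
  ⟨c 0, 0, hc.1, rfl⟩

end Cyc

lemma good_singleton_of_var {i : Fin n} (hv : VarNode A x i) : Good A x {i} := by
  have hib : x i ≠ ⊥ := by rcases hv with hv | hv <;> exact hv.1
  refine ⟨by simpa [Supp] using hib, ⟨i, rfl⟩, ?_⟩
  intro j hsat hj
  rw [Set.mem_singleton_iff] at hj
  obtain ⟨k, hk⟩ := hsat
  by_cases hki : k = i
  · subst hki
    rcases hv with hv | hv
    · exact absurd (hv.2 j hk) hj
    · obtain ⟨k', hk', harc⟩ := hv.2 j hj hk
      exact ⟨k', harc, by simpa using hk'⟩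
  · exact ⟨k, hk, by simpa using hki⟩

lemma goodPair_of_isolated {W : Set (Fin n)} (hW : IsolatedSet A x W) (hne : W.Nonempty)
    (hss : W ⊂ Supp x) : GoodPair A x := by
  refine ⟨W, Supp x \ W, ⟨hW.1, hne, ?_⟩, ⟨Set.diff_subset, ?_, ?_⟩, Set.disjoint_sdiff_right⟩
  · intro j hsat hj
    obtain ⟨k, hk⟩ := hsat
    exact ⟨k, hk, fun hkW => hj ((hW.2 k j hk).1 hkW)⟩
  · obtain ⟨v, hv, hvW⟩ := (Set.ssubset_iff_of_subset hW.1).1 hss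
    exact ⟨v, hv, hvW⟩
  · intro j hsat hj
    obtain ⟨k, hk⟩ := hsat
    have hjS : j ∈ Supp x := hk.2.1
    have hjW : j ∈ W := by
      by_contra h
      exact hj ⟨hjS, h⟩
    have hkW : k ∈ W := (hW.2 k j hk).2 hjW
    exact ⟨k, hk, fun h => h.2 hkW⟩

lemma good_reach_cyc {k : ℕ} {c : ℕ → Fin n} (hc : IsCycle A x k c) :
    Good A x (Reach A x (c '' Set.Iio k)) := by
  refine ⟨reach_subset_supp (cyc_img_supp hc), 
    (cyc_img_nonempty hc).mono (subset_reach _), ?_⟩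
  intro j hsat hj
  obtain ⟨l, hl⟩ := hsat
  refine ⟨l, hl, fun hlR => hj (reach_closed hlR hl)⟩

/-- reach of `C₂` avoiding `U := Reach C₁`, when `C₂` misses `U`. -/
lemma goodPair_of_nonmutual {k₁ k₂ : ℕ} {c₁ c₂ : ℕ → Fin n} (hc₁ : IsCycle A x k₁ c₁)
    (hc₂ : IsCycle A x k₂ c₂)
    (hdisj : (c₂ '' Set.Iio k₂) ∩ Reach A x (c₁ '' Set.Iio k₁) = ∅) : GoodPair A x := by
  set U := Reach A x (c₁ '' Set.Iio k₁) with hUdef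
  set V : Set (Fin n) := {b | b ∉ U ∧ ∃ a ∈ c₂ '' Set.Iio k₂,
    Relation.ReflTransGen (fun p q => Arc A x p q ∧ q ∉ U) a b} with hVdef
  have hC₂V : c₂ '' Set.Iio k₂ ⊆ V := by
    intro v hv
    have hvU : v ∉ U := fun hvU => Set.eq_empty_iff_forall_notMem.1 hdisj v ⟨hv, hvU⟩
    exact ⟨hvU, v, hv, Relation.ReflTransGen.refl⟩
  have hVsupp : V ⊆ Supp x := by
    rintro b ⟨hbU, a, ha, hab⟩
    induction hab with
    | refl => exact cyc_img_supp hc₂ ha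
    | tail _ hstep _ => exact hstep.1.2.1
  refine ⟨U, V, good_reach_cyc hc₁, ⟨hVsupp, (cyc_img_nonempty hc₂).mono hC₂V, ?_⟩, ?_⟩
  · intro j hsat hjV
    by_cases hjU : j ∈ U
    · -- j reachable from C₁ : either in C₁ (cycle pred) or has in-nbr in U
      obtain ⟨a, ha, hab⟩ := hjU
      rcases (Relation.ReflTransGen.cases_tail hab) with rfl | ⟨b, hb, harc⟩
      · obtain ⟨t, ht, rfl⟩ := ha
        obtain ⟨s, hs, harc⟩ := cyc_pred hc₁ ht
        refine ⟨c₁ s, harc, fun hV => hV.1 (subset_reach _ ⟨s, hs, rfl⟩)⟩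
      · exact ⟨b, harc, fun hV => hV.1 ⟨a, ha, hb⟩⟩
    · obtain ⟨l, hl⟩ := hsat
      refine ⟨l, hl, fun hlV => ?_⟩
      obtain ⟨hlU, a, ha, hab⟩ := hlV
      exact hjV ⟨hjU, a, ha, hab.tail ⟨hl, hjU⟩⟩
  · rw [Set.disjoint_left]
    intro b hbU hbV
    exact hbV.1 hbU

/-! ### the invariable-node function F -/

noncomputable def F (A : Matrix (Fin n) (Fin n) (WithBot ℝ)) (x : Fin n → WithBot ℝ) :
    Fin n → Fin n :=
  fun i => if h : Invariable A x i then Classical.choose h.2 else i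

lemma F_spec {i : Fin n} (h : Invariable A x i) :
    F A x i ≠ i ∧ Arc A x i (F A x i) ∧ ∀ k, Arc A x k (F A x i) → k = i := by
  have hs := Classical.choose_spec h.2
  rw [F, dif_pos h]
  exact ⟨hs.1, hs.2.1, hs.2.2⟩

def ISet (A : Matrix (Fin n) (Fin n) (WithBot ℝ)) (x : Fin n → WithBot ℝ) : Set (Fin n) :=
  {i | Invariable A x i}

def ImgF (A : Matrix (Fin n) (Fin n) (WithBot ℝ)) (x : Fin n → WithBot ℝ) : Set (Fin n) :=
  F A x '' ISet A x

def MSet (A : Matrix (Fin n) (Fin n) (WithBot ℝ)) (x : Fin n → WithBot ℝ) : Set (Fin n) :=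
  Supp x \ ImgF A x

def ESet (A : Matrix (Fin n) (Fin n) (WithBot ℝ)) (x : Fin n → WithBot ℝ) : Set (Fin n) :=
  {i | x i ≠ ⊥ ∧ ¬ Invariable A x i}

lemma iivar_of_not_inv {i : Fin n} (hi : x i ≠ ⊥) (hni : ¬ Invariable A x i) : IIVar A x i := by
  refine ⟨hi, fun j hj harc => ?_⟩
  by_contra hno
  push_neg at hno
  refine hni ⟨hi, j, hj, harc, fun k hk => ?_⟩
  by_contra hki
  exact hno k hki hk

lemma eset_subsingleton (Hvar : ∀ i j, VarNode A x i → VarNode A x j → i = j) :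
    (ESet A x).Subsingleton := fun a ha b hb =>
  Hvar a b (Or.inr (iivar_of_not_inv ha.1 ha.2)) (Or.inr (iivar_of_not_inv hb.1 hb.2))

lemma F_injOn : Set.InjOn (F A x) (ISet A x) := by
  intro a ha b hb hab
  exact (F_spec hb).2.2 a (hab ▸ (F_spec ha).2.1)

lemma imgF_subset_supp : ImgF A x ⊆ Supp x := by
  rintro w ⟨i, hi, rfl⟩
  exact (F_spec hi).2.1.2.1

lemma iset_subset_supp : ISet A x ⊆ Supp x := fun i hi => hi.1

lemma supp_eq_union : Supp x = ISet A x ∪ ESet A x := by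
  ext i
  constructor
  · intro hi
    by_cases h : Invariable A x i
    · exact Or.inl h
    · exact Or.inr ⟨hi, h⟩
  · rintro (hi | hi)
    · exact hi.1
    · exact hi.1

lemma mset_subsingleton (Hvar : ∀ i j, VarNode A x i → VarNode A x j → i = j) :
    (MSet A x).Subsingleton := by
  have hE := eset_subsingleton Hvar
  have hEcard : (ESet A x).ncard ≤ 1 := by
    rcases (ESet A x).eq_empty_or_nonempty with h | ⟨a, ha⟩
    · simp [h]
    · rw [hE.eq_singleton_of_mem ha]; simp
  have hIcard : (ImgF A x).ncard = (ISet A x).ncard := Set.ncard_image_of_injOn F_injOn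
  have hsupp : (Supp x).ncard ≤ (ISet A x).ncard + (ESet A x).ncard := by
    rw [supp_eq_union (A := A)]
    exact Set.ncard_union_le _ _
  have hdisj2 : Disjoint (ImgF A x) (MSet A x) := Set.disjoint_sdiff_right
  have hun : ImgF A x ∪ MSet A x ⊆ Supp x :=
    Set.union_subset imgF_subset_supp Set.diff_subset
  have hcard2 : (ImgF A x).ncard + (MSet A x).ncard ≤ (Supp x).ncard := by
    rw [← Set.ncard_union_eq hdisj2 (Set.toFinite _) (Set.toFinite _)]
    exact Set.ncard_le_ncard hun (Set.toFinite _)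
  have hM : (MSet A x).ncard ≤ 1 := by omega
  rw [Set.ncard_le_one_iff_eq] at hM
  rcases hM with h | ⟨a, h⟩
  · rw [h]; exact Set.subsingleton_empty
  · rw [h]; exact Set.subsingleton_singleton

/-! ### iterates of F -/

lemma iter_supp {u : Fin n} (hu : x u ≠ ⊥) {t : ℕ}
    (hval : ∀ s < t, Invariable A x ((F A x)^[s] u)) : x ((F A x)^[t] u) ≠ ⊥ := by
  cases t with
  | zero => exact hu
  | succ t =>
    rw [Function.iterate_succ_apply']
    exact (F_spec (hval t (by omega))).2.1.2.1

lemma peel2 {u v : Fin n} : ∀ a b : ℕ, (∀ s < a, Invariable A x ((F A x)^[s] u)) →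
    (∀ s < b, Invariable A x ((F A x)^[s] v)) → (F A x)^[a] u = (F A x)^[b] v →
    (∃ d, d ≤ b ∧ u = (F A x)^[d] v) ∨ (∃ d, d ≤ a ∧ v = (F A x)^[d] u) := by
  intro a
  induction a with
  | zero =>
    intro b _ _ h
    exact Or.inl ⟨b, le_rfl, h⟩
  | succ a ih =>
    intro b hu hv h
    cases b with
    | zero => exact Or.inr ⟨a + 1, le_rfl, h.symm⟩
    | succ b =>
      rw [Function.iterate_succ_apply', Function.iterate_succ_apply'] at h
      have h' := F_injOn (hu a (by omega)) (hv b (by omega)) h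
      rcases ih b (fun s hs => hu s (by omega)) (fun s hs => hv s (by omega)) h' with
        ⟨d, hd, hh⟩ | ⟨d, hd, hh⟩
      · exact Or.inl ⟨d, by omega, hh⟩
      · exact Or.inr ⟨d, by omega, hh⟩

lemma peel_iter {u : Fin n} (hall : ∀ s, Invariable A x ((F A x)^[s] u)) :
    ∀ a b : ℕ, a ≤ b → (F A x)^[a] u = (F A x)^[b] u → u = (F A x)^[b - a] u := by
  intro a
  induction a with
  | zero => intro b _ h; exact h
  | succ a ih =>
    intro b hab h
    cases b with
    | zero => omega
    | succ b =>
      rw [Function.iterate_succ_apply', Function.iterate_succ_apply'] at h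
      have h' := F_injOn (hall a) (hall b) h
      have := ih b (by omega) h'
      rwa [show b + 1 - (a + 1) = b - a by omega]

lemma iter_mul_fix {u : Fin n} {p : ℕ} (hp : (F A x)^[p] u = u) (m : ℕ) :
    (F A x)^[p * m] u = u := by
  induction m with
  | zero => simp
  | succ m ih => rw [Nat.mul_succ, Function.iterate_add_apply, hp, ih]

lemma iter_mod_fix {u : Fin n} {p : ℕ} (hp : (F A x)^[p] u = u) (q : ℕ) :
    (F A x)^[q % p] u = (F A x)^[q] u := by
  conv_rhs => rw [← Nat.mod_add_div q p]
  rw [Function.iterate_add_apply, iter_mul_fix hp]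

/-! ### F-cycles -/

def FCyc (A : Matrix (Fin n) (Fin n) (WithBot ℝ)) (x : Fin n → WithBot ℝ)
    (O : Set (Fin n)) : Prop :=
  O.Nonempty ∧ ∀ z ∈ O, Invariable A x z ∧ F A x z ∈ O ∧ ∃ w ∈ O, F A x w = z

lemma fcyc_subset_img {O : Set (Fin n)} (h : FCyc A x O) : O ⊆ ImgF A x := by
  intro z hz
  obtain ⟨w, hw, hwz⟩ := (h.2 z hz).2.2
  exact ⟨w, (h.2 w hw).1, hwz⟩

lemma fcyc_subset_supp {O : Set (Fin n)} (h : FCyc A x O) : O ⊆ Supp x :=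
  fun z hz => (h.2 z hz).1.1

lemma fcyc_pre {O : Set (Fin n)} (h : FCyc A x O) {u : Fin n} (hu : Invariable A x u)
    (hFu : F A x u ∈ O) : u ∈ O := by
  obtain ⟨w, hw, hwz⟩ := (h.2 _ hFu).2.2
  rwa [← F_injOn (h.2 w hw).1 hu hwz]

lemma fcyc_iter_pre {O : Set (Fin n)} (h : FCyc A x O) {u : Fin n} :
    ∀ t : ℕ, (∀ s < t, Invariable A x ((F A x)^[s] u)) → (F A x)^[t] u ∈ O → u ∈ O := by
  intro t
  induction t with
  | zero => intro _ hu; exact hu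
  | succ t ih =>
    intro hval hu
    rw [Function.iterate_succ_apply'] at hu
    exact ih (fun s hs => hval s (by omega)) (fcyc_pre h (hval t (by omega)) hu)

lemma fcyc_in_arc {O : Set (Fin n)} (h : FCyc A x O) {a z : Fin n} (harc : Arc A x a z)
    (hz : z ∈ O) : a ∈ O := by
  obtain ⟨w, hw, hwz⟩ := (h.2 z hz).2.2
  rwa [(F_spec (h.2 w hw).1).2.2 a (hwz ▸ harc)]

lemma exists_fcyc {U : Set (Fin n)} (hne : U.Nonempty)
    (hinv : ∀ i ∈ U, Invariable A x i) (hcl : ∀ i ∈ U, F A x i ∈ U) :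
    ∃ O, O ⊆ U ∧ FCyc A x O := by
  obtain ⟨u₀, hu₀⟩ := hne
  have hiter : ∀ t, (F A x)^[t] u₀ ∈ U := by
    intro t
    induction t with
    | zero => exact hu₀
    | succ t ih => rw [Function.iterate_succ_apply']; exact hcl _ ih
  obtain ⟨a, b, hab, heq⟩ := Finite.exists_ne_map_eq_of_infinite (fun t : ℕ => (F A x)^[t] u₀)
  wlog hlt : a < b generalizing a b
  · exact this b a hab.symm heq.symm (by omega)
  set c := (F A x)^[a] u₀ with hc
  set p := b - a with hp
  have hpge : 1 ≤ p := by omega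
  have hcyc : (F A x)^[p] c = c := by
    rw [hc, ← Function.iterate_add_apply, hp]
    rw [show b - a + a = b by omega]
    exact heq.symm
  have hcU : ∀ t, (F A x)^[t] c ∈ U := fun t => by
    rw [hc, ← Function.iterate_add_apply]; exact hiter _
  refine ⟨{v | ∃ t, v = (F A x)^[t] c}, ?_, ⟨c, 0, rfl⟩, ?_⟩
  · rintro v ⟨t, rfl⟩; exact hcU t
  · rintro z ⟨t, rfl⟩
    refine ⟨hinv _ (hcU t), ⟨t + 1, by rw [Function.iterate_succ_apply']⟩,
      (F A x)^[t + p - 1] c, ⟨t + p - 1, rfl⟩, ?_⟩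
    have hstep : F A x ((F A x)^[t + p - 1] c) = (F A x)^[t + p - 1 + 1] c :=
      (Function.iterate_succ_apply' _ _ _).symm
    rw [hstep, show t + p - 1 + 1 = t + p by omega, Function.iterate_add_apply, hcyc]

lemma fcyc_to_cycle {O : Set (Fin n)} (h : FCyc A x O) :
    ∃ k c, IsCycle A x k c ∧ c '' Set.Iio k ⊆ O := by
  obtain ⟨z₀, hz₀⟩ := h.1
  have hiter : ∀ t, (F A x)^[t] z₀ ∈ O := by
    intro t
    induction t with
    | zero => exact hz₀
    | succ t ih => rw [Function.iterate_succ_apply']; exact (h.2 _ ih).2.1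
  have hinv : ∀ t, Invariable A x ((F A x)^[t] z₀) := fun t => (h.2 _ (hiter t)).1
  obtain ⟨a, b, hab, heq⟩ := Finite.exists_ne_map_eq_of_infinite (fun t : ℕ => (F A x)^[t] z₀)
  wlog hlt : a < b generalizing a b
  · exact this b a hab.symm heq.symm (by omega)
  have hfix : z₀ = (F A x)^[b - a] z₀ := peel_iter hinv a b (by omega) heq
  set p := b - a with hp
  refine ⟨p, fun t => (F A x)^[t] z₀, ⟨by omega, ?_⟩, ?_⟩
  · intro t ht
    have harc : Arc A x ((F A x)^[t] z₀) (F A x ((F A x)^[t] z₀)) := (F_spec (hinv t)).2.1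
    show Arc A x ((F A x)^[t] z₀) ((F A x)^[(t + 1) % p] z₀)
    rw [iter_mod_fix hfix.symm (t + 1), Function.iterate_succ_apply']
    exact harc
  · rintro v ⟨t, _, rfl⟩; exact hiter t

lemma fcyc_of_cycle {k : ℕ} {c : ℕ → Fin n} (hc : IsCycle A x k c)
    (hM : ∀ t < k, c t ∉ MSet A x) :
    (∀ t < k, Invariable A x (c t) ∧ F A x (c t) = c ((t + 1) % k)) ∧
      FCyc A x (c '' Set.Iio k) := by
  have key : ∀ t < k, Invariable A x (c t) ∧ F A x (c t) = c ((t + 1) % k) := by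
    intro t ht
    have harc := hc.2 t ht
    have hw : c ((t + 1) % k) ∈ ImgF A x := by
      have hm := hM ((t + 1) % k) (Nat.mod_lt _ (by omega))
      have hsupp : c ((t + 1) % k) ∈ Supp x := harc.2.1
      by_contra hni
      exact hm ⟨hsupp, hni⟩
    obtain ⟨d, hd, hdw⟩ := hw
    have : c t = d := (F_spec hd).2.2 _ (hdw ▸ harc)
    rw [← this] at hd hdw
    exact ⟨hd, hdw⟩
  refine ⟨key, ⟨c 0, 0, hc.1, rfl⟩, ?_⟩
  rintro z ⟨t, ht, rfl⟩
  have ht' : t < k := ht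
  refine ⟨(key t ht').1, ?_, ?_⟩
  · rw [(key t ht').2]
    exact ⟨(t + 1) % k, Nat.mod_lt _ (by omega), rfl⟩
  · have hsk : (t + k - 1) % k < k := Nat.mod_lt _ (by omega)
    refine ⟨c ((t + k - 1) % k), ⟨(t + k - 1) % k, hsk, rfl⟩, ?_⟩
    rw [(key _ hsk).2, mod_succ_pred ht']

/-! ### valid orbits -/

def VOrbit (A : Matrix (Fin n) (Fin n) (WithBot ℝ)) (x : Fin n → WithBot ℝ)
    (u : Fin n) : Set (Fin n) :=
  {v | ∃ t, v = (F A x)^[t] u ∧ ∀ s < t, Invariable A x ((F A x)^[s] u)}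

lemma mem_vorbit_self (u : Fin n) : u ∈ VOrbit A x u := ⟨0, rfl, by omega⟩

lemma vorbit_supp {u : Fin n} (hu : x u ≠ ⊥) {v : Fin n} (hv : v ∈ VOrbit A x u) :
    x v ≠ ⊥ := by
  obtain ⟨t, rfl, hval⟩ := hv
  exact iter_supp hu hval

lemma vorbit_disjoint_fcyc {O : Set (Fin n)} (hO : FCyc A x O) {u : Fin n} (hu : u ∉ O) :
    VOrbit A x u ∩ O = ∅ := by
  rw [Set.eq_empty_iff_forall_notMem]
  rintro v ⟨⟨t, rfl, hval⟩, hvO⟩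
  exact hu (fcyc_iter_pre hO t hval hvO)

lemma not_all_inv_of_mset {u : Fin n} (hm : u ∈ MSet A x)
    (hall : ∀ t, Invariable A x ((F A x)^[t] u)) : False := by
  obtain ⟨a, b, hab, heq⟩ := Finite.exists_ne_map_eq_of_infinite (fun t : ℕ => (F A x)^[t] u)
  wlog hlt : a < b generalizing a b
  · exact this b a hab.symm heq.symm (by omega)
  have hfix := peel_iter hall a b (by omega) heq
  have hge : 1 ≤ b - a := by omega
  have : u = F A x ((F A x)^[b - a - 1] u) := by
    have hstep : F A x ((F A x)^[b - a - 1] u) = (F A x)^[b - a - 1 + 1] u :=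
      (Function.iterate_succ_apply' _ _ _).symm
    rw [hstep, show b - a - 1 + 1 = b - a by omega]
    exact hfix
  exact hm.2 ⟨_, hall (b - a - 1), this.symm⟩

lemma exists_endpoint {u : Fin n} (hnall : ¬ ∀ t, Invariable A x ((F A x)^[t] u)) :
    ∃ t, (∀ s < t, Invariable A x ((F A x)^[s] u)) ∧ ¬ Invariable A x ((F A x)^[t] u) := by
  push_neg at hnall
  have hex : ∃ t, ¬ Invariable A x ((F A x)^[t] u) := hnall
  refine ⟨Nat.find hex, fun s hs => ?_, Nat.find_spec hex⟩
  by_contra hns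
  exact Nat.find_min hex hs hns

lemma vorbit_out (hM : (MSet A x).Subsingleton) {u : Fin n} (hu : u ∈ MSet A x) :
    ∀ v ∈ VOrbit A x u, ∀ b, Arc A x v b → b ∈ VOrbit A x u := by
  rintro v ⟨t, rfl, hval⟩ b harc
  have hbsupp : x b ≠ ⊥ := harc.2.1
  by_cases hbi : b ∈ ImgF A x
  · obtain ⟨d, hd, rfl⟩ := hbi
    have hdv : (F A x)^[t] u = d := (F_spec hd).2.2 _ harc
    subst hdv
    refine ⟨t + 1, by rw [Function.iterate_succ_apply'], fun s hs => ?_⟩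
    rcases Nat.lt_or_ge s t with h | h
    · exact hval s h
    · have : s = t := by omega
      rw [this]
      exact hd
  · have : b ∈ MSet A x := ⟨hbsupp, hbi⟩
    rw [hM this hu]
    exact mem_vorbit_self u

lemma reach_subset_of_closed {T T' : Set (Fin n)} (hsub : T' ⊆ T)
    (hcl : ∀ v ∈ T, ∀ b, Arc A x v b → b ∈ T) : Reach A x T' ⊆ T := by
  rintro b ⟨a, ha, hab⟩
  induction hab with
  | refl => exact hsub ha
  | tail h harc ih => exact hcl _ ih _ harc

lemma fcyc_out {O : Set (Fin n)} (hO : FCyc A x O) {z b : Fin n} (hz : z ∈ O)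
    (harc : Arc A x z b) (hbi : b ∈ ImgF A x) : b ∈ O := by
  obtain ⟨d, hd, rfl⟩ := hbi
  have hdz : z = d := (F_spec hd).2.2 _ harc
  subst hdz
  exact (hO.2 z hz).2.1

/-! ### the mutual-reachability contradiction -/

lemma mutual_false_core (hM : (MSet A x).Subsingleton) {k₁ k₂ : ℕ} {c₁ c₂ : ℕ → Fin n}
    (hc₁ : IsCycle A x k₁ c₁) (hc₂ : IsCycle A x k₂ c₂)
    (hdisj : Disjoint (c₁ '' Set.Iio k₁) (c₂ '' Set.Iio k₂))
    (hm₁ : ((c₂ '' Set.Iio k₂) ∩ Reach A x (c₁ '' Set.Iio k₁)).Nonempty)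
    (hm₂ : ((c₁ '' Set.Iio k₁) ∩ Reach A x (c₂ '' Set.Iio k₂)).Nonempty)
    (hO₁M : (c₁ '' Set.Iio k₁) ∩ MSet A x = ∅) : False := by
  set Z := c₁ '' Set.Iio k₁ with hZdef
  have hMt : ∀ t < k₁, c₁ t ∉ MSet A x := by
    intro t ht hmem
    exact Set.eq_empty_iff_forall_notMem.1 hO₁M (c₁ t) ⟨⟨t, ht, rfl⟩, hmem⟩
  have hZ : FCyc A x Z := (fcyc_of_cycle hc₁ hMt).2
  rcases (MSet A x).eq_empty_or_nonempty with hMS | ⟨m₀, hm₀⟩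
  · -- no M-node : Z is closed
    have hcl : ∀ v ∈ Z, ∀ b, Arc A x v b → b ∈ Z := by
      intro v hv b harc
      have hbi : b ∈ ImgF A x := by
        by_contra hbi
        exact Set.eq_empty_iff_forall_notMem.1 hMS b ⟨harc.2.1, hbi⟩
      exact fcyc_out hZ hv harc hbi
    obtain ⟨w, hw₂, hwR⟩ := hm₁
    exact (hdisj.ne_of_mem (reach_subset_of_closed le_rfl hcl hwR) hw₂) rfl
  · have hm₀Z : m₀ ∉ Z := fun h => Set.eq_empty_iff_forall_notMem.1 hO₁M m₀ ⟨h, hm₀⟩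
    set S := VOrbit A x m₀ with hSdef
    have hSZ : S ∩ Z = ∅ := vorbit_disjoint_fcyc hZ hm₀Z
    have hScl : ∀ v ∈ S, ∀ b, Arc A x v b → b ∈ S := vorbit_out hM hm₀
    have hTcl : ∀ v ∈ Z ∪ S, ∀ b, Arc A x v b → b ∈ Z ∪ S := by
      rintro v (hv | hv) b harc
      · by_cases hbi : b ∈ ImgF A x
        · exact Or.inl (fcyc_out hZ hv harc hbi)
        · have : b ∈ MSet A x := ⟨harc.2.1, hbi⟩
          rw [hM this hm₀]
          exact Or.inr (mem_vorbit_self m₀)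
      · exact Or.inr (hScl v hv b harc)
    obtain ⟨w, hw₂, hwR⟩ := hm₁
    have hwT : w ∈ Z ∪ S := reach_subset_of_closed Set.subset_union_left hTcl hwR
    have hwS : w ∈ S := by
      rcases hwT with h | h
      · exact absurd rfl (hdisj.ne_of_mem h hw₂)
      · exact h
    -- all of O₂ is then inside S
    obtain ⟨t, ht, hteq⟩ := hw₂
    have hO₂S : c₂ '' Set.Iio k₂ ⊆ S := by
      have h1 : c₂ t ∈ Reach A x S := subset_reach _ (hteq ▸ hwS)
      exact (cyc_subset_reach hc₂ ht h1).trans (reach_subset_of_closed le_rfl hScl)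
    obtain ⟨v, hv₁, hvR⟩ := hm₂
    have hvS : v ∈ S := reach_subset_of_closed hO₂S hScl hvR
    exact Set.eq_empty_iff_forall_notMem.1 hSZ v ⟨hvS, hv₁⟩

lemma mutual_false (Hvar : ∀ i j, VarNode A x i → VarNode A x j → i = j)
    {k₁ k₂ : ℕ} {c₁ c₂ : ℕ → Fin n}
    (hc₁ : IsCycle A x k₁ c₁) (hc₂ : IsCycle A x k₂ c₂)
    (hdisj : Disjoint (c₁ '' Set.Iio k₁) (c₂ '' Set.Iio k₂))
    (hm₁ : ((c₂ '' Set.Iio k₂) ∩ Reach A x (c₁ '' Set.Iio k₁)).Nonempty)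
    (hm₂ : ((c₁ '' Set.Iio k₁) ∩ Reach A x (c₂ '' Set.Iio k₂)).Nonempty) : False := by
  have hM := mset_subsingleton Hvar
  by_cases hO₁M : (c₁ '' Set.Iio k₁) ∩ MSet A x = ∅
  · exact mutual_false_core hM hc₁ hc₂ hdisj hm₁ hm₂ hO₁M
  · by_cases hO₂M : (c₂ '' Set.Iio k₂) ∩ MSet A x = ∅
    · exact mutual_false_core hM hc₂ hc₁ hdisj.symm hm₂ hm₁ hO₂M
    · rw [← Set.not_nonempty_iff_eq_empty, not_not] at hO₁M hO₂M
      obtain ⟨a, haC, haM⟩ := hO₁M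
      obtain ⟨b, hbC, hbM⟩ := hO₂M
      rw [hM haM hbM] at haC
      exact (hdisj.ne_of_mem haC hbC) rfl

/-! ### conditions imply no good pair -/

lemma good_fclosed {U : Set (Fin n)} (hU : Good A x U) {i : Fin n} (hi : i ∈ U)
    (hinv : Invariable A x i) : F A x i ∈ U := by
  by_contra hFi
  obtain ⟨k, hk, hkU⟩ := hU.2.2 (F A x i) ⟨i, (F_spec hinv).2.1⟩ hFi
  exact hkU (((F_spec hinv).2.2 k hk) ▸ hi)

lemma no_goodPair_core
    (H1 : ∀ W : Set (Fin n), W.Nonempty → W ⊂ Supp x → ¬ IsolatedSet A x W)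
    (H2 : ∀ (k₁ k₂ : ℕ) (c₁ c₂ : ℕ → Fin n), IsCycle A x k₁ c₁ → IsCycle A x k₂ c₂ →
      ¬ Disjoint (c₁ '' Set.Iio k₁) (c₂ '' Set.Iio k₂))
    (Hvar : ∀ i j, VarNode A x i → VarNode A x j → i = j)
    {U V : Set (Fin n)} (hU : Good A x U) (hV : Good A x V) (hdisj : Disjoint U V)
    (hUE : U ∩ ESet A x = ∅) : False := by
  -- U consists of invariable nodes and is F-closed, hence contains an F-cycle Z
  have hUinv : ∀ i ∈ U, Invariable A x i := by
    intro i hi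
    by_contra h
    exact Set.eq_empty_iff_forall_notMem.1 hUE i ⟨hi, hU.1 hi, h⟩
  obtain ⟨Z, hZU, hZ⟩ := exists_fcyc hU.2.1 hUinv (fun i hi => good_fclosed hU hi (hUinv i hi))
  -- helper to get a contradiction from two disjoint F-cycle-ish cycles
  have htwo : ∀ (S' : Set (Fin n)), (∃ k c, IsCycle A x k c ∧ c '' Set.Iio k ⊆ S') →
      S' ∩ Z = ∅ → False := by
    rintro S' ⟨k, c, hc, hsub⟩ hS'Z
    obtain ⟨k', c', hc', hsub'⟩ := fcyc_to_cycle hZ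
    refine H2 k k' c c' hc hc' (Set.disjoint_left.2 ?_)
    intro v hv hv'
    exact Set.eq_empty_iff_forall_notMem.1 hS'Z v ⟨hsub hv, hsub' hv'⟩
  -- Z is not isolated, and the only possible boundary arc goes from Z into M
  have hZsupp : Z ⊆ Supp x := fcyc_subset_supp hZ
  have hZssub : Z ⊂ Supp x := by
    rw [Set.ssubset_iff_of_subset hZsupp]
    obtain ⟨v₀, hv₀⟩ := hV.2.1
    exact ⟨v₀, hV.1 hv₀, fun hv₀Z => (hdisj.ne_of_mem (hZU hv₀Z) hv₀) rfl⟩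
  have Hiso := H1 Z hZ.1 hZssub
  rw [IsolatedSet] at Hiso
  push_neg at Hiso
  obtain ⟨z₀, m₀, harc₀, hniff⟩ := Hiso hZsupp
  have hzm : z₀ ∈ Z ∧ m₀ ∉ Z := by
    rcases hniff with h | h
    · exact h
    · exact absurd (fcyc_in_arc hZ harc₀ h.2) h.1
  obtain ⟨hz₀Z, hm₀Z⟩ := hzm
  have hm₀M : m₀ ∈ MSet A x := by
    refine ⟨harc₀.2.1, fun hbi => hm₀Z (fcyc_out hZ hz₀Z harc₀ hbi)⟩
  -- m₀ ∉ U
  have hm₀U : m₀ ∉ U := by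
    intro hm₀U
    have hiterU : ∀ t, (F A x)^[t] m₀ ∈ U := by
      intro t
      induction t with
      | zero => exact hm₀U
      | succ t ih =>
        rw [Function.iterate_succ_apply']
        exact good_fclosed hU ih (hUinv _ ih)
    exact not_all_inv_of_mset hm₀M (fun t => hUinv _ (hiterU t))
  -- goodness of U at m₀ gives an in-neighbour outside U
  obtain ⟨k₀, hk₀arc, hk₀U⟩ := hU.2.2 m₀ ⟨z₀, harc₀⟩ hm₀U
  have hk₀Z : k₀ ∉ Z := fun h => hk₀U (hZU h)
  set S := VOrbit A x m₀ with hSdef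
  have hSZ : S ∩ Z = ∅ := vorbit_disjoint_fcyc hZ hm₀Z
  by_cases hk₀S : k₀ ∈ S
  · -- a cycle through m₀, disjoint from Z
    obtain ⟨t, hk₀eq, hval⟩ := hk₀S
    refine htwo S ⟨t + 1, fun s => (F A x)^[s] m₀, ⟨by omega, ?_⟩, ?_⟩ hSZ
    · intro s hs
      rcases Nat.lt_or_ge s t with hst | hst
      · have harc : Arc A x ((F A x)^[s] m₀) (F A x ((F A x)^[s] m₀)) :=
          (F_spec (hval s hst)).2.1
        show Arc A x ((F A x)^[s] m₀) ((F A x)^[(s + 1) % (t + 1)] m₀)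
        rw [Nat.mod_eq_of_lt (by omega), Function.iterate_succ_apply']
        exact harc
      · have hst' : s = t := by omega
        subst hst'
        show Arc A x ((F A x)^[s] m₀) ((F A x)^[(s + 1) % (s + 1)] m₀)
        rw [Nat.mod_self]
        exact hk₀eq ▸ hk₀arc
    · rintro v ⟨s, hs, rfl⟩
      have hs' : s < t + 1 := hs
      exact ⟨s, rfl, fun s' hs' => hval s' (by omega)⟩
  · -- k₀ outside S : follow its own orbit
    have hk₀supp : x k₀ ≠ ⊥ := hk₀arc.1
    -- endpoint of the orbit of m₀
    have hnallm : ¬ ∀ t, Invariable A x ((F A x)^[t] m₀) := fun h => not_all_inv_of_mset hm₀M h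
    obtain ⟨tm, hvalm, hendm⟩ := exists_endpoint hnallm
    have hvstar_supp : x ((F A x)^[tm] m₀) ≠ ⊥ := iter_supp hm₀M.1 hvalm
    have hvstarE : (F A x)^[tm] m₀ ∈ ESet A x := ⟨hvstar_supp, hendm⟩
    have hvstarS : (F A x)^[tm] m₀ ∈ S := ⟨tm, rfl, hvalm⟩
    by_cases hinvk : Invariable A x k₀
    · by_cases hallk : ∀ t, Invariable A x ((F A x)^[t] k₀)
      · -- the orbit of k₀ is entirely invariable : it contains an F-cycle disjoint from Z
        obtain ⟨O', hO'sub, hO'⟩ := exists_fcyc (U := {v | ∃ t, v = (F A x)^[t] k₀})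
          ⟨k₀, 0, rfl⟩ (by rintro v ⟨t, rfl⟩; exact hallk t)
          (by rintro v ⟨t, rfl⟩; exact ⟨t + 1, by rw [Function.iterate_succ_apply']⟩)
        have hO'Z : O' ∩ Z = ∅ := by
          rw [Set.eq_empty_iff_forall_notMem]
          rintro v ⟨hvO', hvZ⟩
          obtain ⟨t, rfl⟩ := hO'sub hvO'
          exact hk₀Z (fcyc_iter_pre hZ t (fun s _ => hallk s) hvZ)
        exact htwo O' (fcyc_to_cycle hO') hO'Z
      · -- the orbit of k₀ ends in E ; E is a subsingleton so both orbits end at the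
        -- same node, and peeling gives a contradiction
        obtain ⟨tk, hvalk, hendk⟩ := exists_endpoint hallk
        have hwstar_supp : x ((F A x)^[tk] k₀) ≠ ⊥ := iter_supp hk₀supp hvalk
        have hwstarE : (F A x)^[tk] k₀ ∈ ESet A x := ⟨hwstar_supp, hendk⟩
        have heq : (F A x)^[tk] k₀ = (F A x)^[tm] m₀ :=
          eset_subsingleton Hvar hwstarE hvstarE
        rcases peel2 tk tm hvalk hvalm heq with ⟨d, hd, hk₀d⟩ | ⟨d, hd, hm₀d⟩
        · exact hk₀S ⟨d, hk₀d, fun s hs => hvalm s (by omega)⟩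
        · rcases Nat.eq_zero_or_pos d with rfl | hdpos
          · have hmk : m₀ = k₀ := by simpa using hm₀d
            exact hk₀S (by rw [← hmk]; exact mem_vorbit_self m₀)
          · have : m₀ = F A x ((F A x)^[d - 1] k₀) := by
              have hstep : F A x ((F A x)^[d - 1] k₀) = (F A x)^[d - 1 + 1] k₀ :=
                (Function.iterate_succ_apply' _ _ _).symm
              rw [hstep, show d - 1 + 1 = d by omega]
              exact hm₀d
            exact hm₀M.2 ⟨_, hvalk (d - 1) (by omega), this.symm⟩
    · -- k₀ is itself an E-node, hence equal to the endpoint of the orbit of m₀,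
      -- which lies in S : contradiction
      have hk₀E : k₀ ∈ ESet A x := ⟨hk₀supp, hinvk⟩
      have : k₀ = (F A x)^[tm] m₀ := eset_subsingleton Hvar hk₀E hvstarE
      exact hk₀S (this ▸ hvstarS)

lemma no_goodPair
    (H1 : ∀ W : Set (Fin n), W.Nonempty → W ⊂ Supp x → ¬ IsolatedSet A x W)
    (H2 : ∀ (k₁ k₂ : ℕ) (c₁ c₂ : ℕ → Fin n), IsCycle A x k₁ c₁ → IsCycle A x k₂ c₂ →
      ¬ Disjoint (c₁ '' Set.Iio k₁) (c₂ '' Set.Iio k₂))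
    (Hvar : ∀ i j, VarNode A x i → VarNode A x j → i = j) : ¬ GoodPair A x := by
  rintro ⟨U, V, hU, hV, hdisj⟩
  by_cases hUE : U ∩ ESet A x = ∅
  · exact no_goodPair_core H1 H2 Hvar hU hV hdisj hUE
  · by_cases hVE : V ∩ ESet A x = ∅
    · exact no_goodPair_core H1 H2 Hvar hV hU hdisj.symm hVE
    · rw [← Set.not_nonempty_iff_eq_empty, not_not] at hUE hVE
      obtain ⟨a, haU, haE⟩ := hUE
      obtain ⟨b, hbV, hbE⟩ := hVE
      rw [eset_subsingleton Hvar haE hbE] at haU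
      exact (hdisj.ne_of_mem haU hbV) rfl

lemma goodPair_of_not_conds (hx : x ∈ SuperEig A)
    (h : ¬ ((∀ W : Set (Fin n), W.Nonempty → W ⊂ Supp x → ¬ IsolatedSet A x W) ∧
      (∀ (k₁ k₂ : ℕ) (c₁ c₂ : ℕ → Fin n), IsCycle A x k₁ c₁ → IsCycle A x k₂ c₂ →
        ¬ Disjoint (c₁ '' Set.Iio k₁) (c₂ '' Set.Iio k₂)) ∧
      (∀ i j, VarNode A x i → VarNode A x j → i = j))) : GoodPair A x := by
  rw [not_and_or, not_and_or] at h
  rcases h with h | h | h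
  · -- an isolated set
    push_neg at h
    obtain ⟨W, hWne, hWss, hWiso⟩ := h
    exact goodPair_of_isolated hWiso hWne hWss
  · -- two disjoint cycles
    push_neg at h
    obtain ⟨k₁, k₂, c₁, c₂, hc₁, hc₂, hdisj⟩ := h
    by_cases hm₁ : (c₂ '' Set.Iio k₂) ∩ Reach A x (c₁ '' Set.Iio k₁) = ∅
    · exact goodPair_of_nonmutual hc₁ hc₂ hm₁
    · by_cases hm₂ : (c₁ '' Set.Iio k₁) ∩ Reach A x (c₂ '' Set.Iio k₂) = ∅
      · exact goodPair_of_nonmutual hc₂ hc₁ hm₂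
      · rw [← Set.not_nonempty_iff_eq_empty, not_not] at hm₁ hm₂
        by_cases h2v : ∃ i j, i ≠ j ∧ VarNode A x i ∧ VarNode A x j
        · obtain ⟨i, j, hij, hvi, hvj⟩ := h2v
          exact ⟨{i}, {j}, good_singleton_of_var hvi, good_singleton_of_var hvj,
            Set.disjoint_singleton.2 hij⟩
        · push_neg at h2v
          have Hvar : ∀ i j, VarNode A x i → VarNode A x j → i = j := by
            intro i j hvi hvj
            by_contra hij
            exact (h2v i j hij hvi) hvj
          exact absurd (mutual_false Hvar hc₁ hc₂ hdisj hm₁ hm₂) (fun h => h)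
  · -- two variable nodes
    push_neg at h
    obtain ⟨i, j, hvi, hvj, hij⟩ := h
    exact ⟨{i}, {j}, good_singleton_of_var hvi, good_singleton_of_var hvj,
      Set.disjoint_singleton.2 hij⟩

theorem stmt14' (hx : x ∈ SuperEig A) :
    IsExtremal A x ↔
      ((∀ W : Set (Fin n), W.Nonempty → W ⊂ Supp x → ¬ IsolatedSet A x W) ∧
        (∀ (k₁ k₂ : ℕ) (c₁ c₂ : ℕ → Fin n), IsCycle A x k₁ c₁ → IsCycle A x k₂ c₂ →
          ¬ Disjoint (c₁ '' Set.Iio k₁) (c₂ '' Set.Iio k₂)) ∧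
        (∀ i j, VarNode A x i → VarNode A x j → i = j)) := by
  rw [extremal_iff_not_goodPair hx]
  constructor
  · intro hng
    by_contra hnc
    exact hng (goodPair_of_not_conds hx hnc)
  · rintro ⟨H1, H2, H3⟩
    exact no_goodPair H1 H2 H3

end S14

/-- main theorem: `x` is an extremal in `𝒳'` iff (i) no nonempty proper
isolated subset of `Supp x`, (ii) no two node-disjoint cycles in `𝒟ₓ`, and
(iii) at most one variable node. -/
theorem stmt14 {n : ℕ} (A : Matrix (Fin n) (Fin n) (WithBot ℝ)) (x : Fin n → WithBot ℝ)
    (hx : x ∈ SuperEig A) :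
    IsExtremal A x ↔
      ((∀ W : Set (Fin n), W.Nonempty → W ⊂ Supp x → ¬ IsolatedSet A x W) ∧
        (∀ (k₁ k₂ : ℕ) (c₁ c₂ : ℕ → Fin n), IsCycle A x k₁ c₁ → IsCycle A x k₂ c₂ →
          ¬ Disjoint (c₁ '' Set.Iio k₁) (c₂ '' Set.Iio k₂)) ∧
        (∀ i j, VarNode A x i → VarNode A x j → i = j)) :=
  S14.stmt14' hx
end
end

section
/- Let x ∈ 𝒳 with |Supp(x)| = s, and suppose the tangent digraph 𝒟_x has exactly one variable node and all other s − 1 nodes are invariable. Then at least s − 1 nodes j ∈ Supp(x) satisfy: (j,j) is not an arc of 𝒟_x and there is exactly one node k ∈ Supp(x) with arc (k,j) in 𝒟_x. -/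
open scoped Classical

noncomputable section

/-- if `𝒟ₓ` has exactly one variable node and all other nodes are
invariable, then at least `|Supp x| - 1` nodes have exactly one incoming arc and
no loop. -/
theorem stmt15 {n : ℕ} (A : Matrix (Fin n) (Fin n) (WithBot ℝ)) (x : Fin n → WithBot ℝ)
    (hx : x ∈ SuperEig A) (i : Fin n)
    (hvar : VarNode A x i) (huniq : ∀ j, VarNode A x j → j = i)
    (hinv : ∀ j ∈ Supp x, j ≠ i → Invariable A x j) :
    (Supp x).ncard - 1 ≤
      {j | j ∈ Supp x ∧ ¬ Arc A x j j ∧ ∃! k, Arc A x k j}.ncard := by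
  classical
  set T : Set (Fin n) := {j | j ∈ Supp x ∧ ¬ Arc A x j j ∧ ∃! k, Arc A x k j} with hT
  set S : Set (Fin n) := Supp x \ {i} with hS
  have hchoose : ∀ j ∈ S, ∃ t, t ≠ j ∧ Arc A x j t ∧ ∀ k, Arc A x k t → k = j := by
    intro j hj
    obtain ⟨hj1, hj2⟩ := hj
    obtain ⟨_, t, ht⟩ := hinv j hj1 hj2
    exact ⟨t, ht⟩
  choose! f hf1 hf2 hf3 using hchoose
  have himg : f '' S ⊆ T := by
    rintro _ ⟨j, hj, rfl⟩
    refine ⟨(hf2 j hj).2.1, ?_, j, hf2 j hj, fun k hk => hf3 j hj k hk⟩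
    intro hloop
    exact (hf1 j hj) (hf3 j hj _ hloop)
  have hinj : Set.InjOn f S := fun a ha b hb hab => hf3 b hb a (hab ▸ hf2 a ha)
  have h1 : S.ncard ≤ T.ncard := by
    rw [← Set.ncard_image_of_injOn hinj]
    exact Set.ncard_le_ncard himg T.toFinite
  have h2 : (Supp x).ncard ≤ S.ncard + 1 := by
    have hsub : Supp x ⊆ S ∪ {i} := by
      intro a ha
      by_cases h : a = i
      · right; simp [h]
      · left; exact ⟨ha, h⟩
    calc (Supp x).ncard ≤ (S ∪ {i}).ncard :=
          Set.ncard_le_ncard hsub (S.toFinite.union (Set.finite_singleton i))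
      _ ≤ S.ncard + ({i} : Set (Fin n)).ncard := Set.ncard_union_le _ _
      _ = S.ncard + 1 := by simp
  omega
end
end
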